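/- Let α ∈ [0, 1/3]. Then for all x ∈ (0, 1): 1 + (1+x)^α − (1−x)^{(1−α)/2} − (1+x)^{(1+α)/2} ≥ ((α−1)²/4) x². -/

import Mathlib

set_option maxHeartbeats 1000000

private lemma hasDerivAt_one_add (p t : ℝ) (h : 0 < 1 + t) :
    HasDerivAt (fun s : ℝ => (1 + s) ^ p) (p * (1 + t) ^ (p - 1)) t := by
  have h1 : HasDerivAt (fun s : ℝ => 1 + s) 1 t := (hasDerivAt_id t).const_add 1
  have := (Real.hasDerivAt_rpow_const (x := 1 + t) (p := p) (Or.inl h.ne')).comp t h1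
  simpa [Function.comp_def] using this

private lemma hasDerivAt_one_sub (p t : ℝ) (h : 0 < 1 - t) :
    HasDerivAt (fun s : ℝ => (1 - s) ^ p) (-(p * (1 - t) ^ (p - 1))) t := by
  have h1 : HasDerivAt (fun s : ℝ => 1 - s) (-1) t := (hasDerivAt_id t).const_sub 1
  have := (Real.hasDerivAt_rpow_const (x := 1 - t) (p := p) (Or.inl h.ne')).comp t h1
  simpa [Function.comp_def] using this

private noncomputable def Fg (α β : ℝ) (t : ℝ) : ℝ :=
  1 + (1 + t) ^ α - (1 - t) ^ β - (1 + t) ^ (1 - β) - (α - 1) ^ 2 / 4 * t ^ 2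

private noncomputable def Fg1 (α β : ℝ) (t : ℝ) : ℝ :=
  α * (1 + t) ^ (α - 1) + β * (1 - t) ^ (β - 1) - (1 - β) * (1 + t) ^ (-β)
    - (α - 1) ^ 2 / 2 * t

private noncomputable def Fg2 (α β : ℝ) (t : ℝ) : ℝ :=
  α * (α - 1) * (1 + t) ^ (α - 2) - β * (β - 1) * (1 - t) ^ (β - 2)
    + (1 - β) * β * (1 + t) ^ (-β - 1) - (α - 1) ^ 2 / 2

private lemma Fg_deriv (α β t : ℝ) (h1t : 0 < 1 + t) (h2t : 0 < 1 - t) :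
    HasDerivAt (Fg α β) (Fg1 α β t) t := by
  have A := (hasDerivAt_one_add α t h1t).const_add 1
  have B := hasDerivAt_one_sub β t h2t
  have C := hasDerivAt_one_add (1 - β) t h1t
  have D : HasDerivAt (fun s : ℝ => (α - 1) ^ 2 / 4 * s ^ 2)
      ((α - 1) ^ 2 / 4 * (↑2 * t ^ 1)) t := (hasDerivAt_pow 2 t).const_mul _
  have E := ((A.sub B).sub C).sub D
  convert E using 1
  · rfl
  · rfl
  · rfl
  rw [show (1 - β - 1 : ℝ) = -β by ring]
  simp only [Fg1]
  ring

private lemma Fg1_deriv (α β t : ℝ) (h1t : 0 < 1 + t) (h2t : 0 < 1 - t) :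
    HasDerivAt (Fg1 α β) (Fg2 α β t) t := by
  have A := (hasDerivAt_one_add (α - 1) t h1t).const_mul α
  have B := (hasDerivAt_one_sub (β - 1) t h2t).const_mul β
  have C := (hasDerivAt_one_add (-β) t h1t).const_mul (1 - β)
  have D : HasDerivAt (fun s : ℝ => (α - 1) ^ 2 / 2 * s) ((α - 1) ^ 2 / 2 * 1) t :=
    (hasDerivAt_id t).const_mul _
  have E := ((A.add B).sub C).sub D
  convert E using 1
  · rfl
  · rfl
  · rfl
  rw [show (α - 1 - 1 : ℝ) = α - 2 by ring, show (β - 1 - 1 : ℝ) = β - 2 by ring]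
  simp only [Fg2]
  ring

private lemma Fg2_nonneg (α : ℝ) (hα0 : 0 ≤ α) (hα1 : α ≤ 1 / 3)
    (t : ℝ) (ht0 : 0 ≤ t) (ht1 : t < 1) :
    0 ≤ Fg2 α ((1 - α) / 2) t := by
  set β : ℝ := (1 - α) / 2 with hβdef
  have hβl : 1 / 3 ≤ β := by rw [hβdef]; linarith
  have hβu : β ≤ 1 / 2 := by rw [hβdef]; linarith
  have h1t : (0 : ℝ) < 1 + t := by linarith
  have h2t : (0 : ℝ) < 1 - t := by linarith
  have e1 : (1 - t) ^ (-β - 1 : ℝ) ≤ (1 - t) ^ (β - 2 : ℝ) :=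
    Real.rpow_le_rpow_of_exponent_ge h2t (by linarith) (by linarith)
  have hprod : (1 : ℝ) ≤ (1 - t) ^ (-β - 1 : ℝ) * (1 + t) ^ (-β - 1 : ℝ) := by
    rw [← Real.mul_rpow h2t.le h1t.le]
    have hle1 : (1 - t) * (1 + t) ≤ 1 := by nlinarith [sq_nonneg t]
    exact Real.one_le_rpow_of_pos_of_le_one_of_nonpos (by nlinarith) hle1 (by linarith)
  have ha : (0 : ℝ) < (1 - t) ^ (-β - 1 : ℝ) := Real.rpow_pos_of_pos h2t _
  have hb : (0 : ℝ) < (1 + t) ^ (-β - 1 : ℝ) := Real.rpow_pos_of_pos h1t _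
  have hsum : (2 : ℝ) ≤ (1 - t) ^ (-β - 1 : ℝ) + (1 + t) ^ (-β - 1 : ℝ) := by
    nlinarith [sq_nonneg ((1 - t) ^ (-β - 1 : ℝ) - (1 + t) ^ (-β - 1 : ℝ)),
      sq_nonneg ((1 - t) ^ (-β - 1 : ℝ) + (1 + t) ^ (-β - 1 : ℝ) - 2)]
  have e3 : (1 + t) ^ (α - 2 : ℝ) ≤ 1 :=
    Real.rpow_le_one_of_one_le_of_nonpos (by linarith) (by linarith)
  have hββ : (0 : ℝ) ≤ β * (1 - β) := by nlinarith
  have hαα : (0 : ℝ) ≤ α * (1 - α) := by nlinarith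
  have hpa : (0 : ℝ) < (1 + t) ^ (α - 2 : ℝ) := Real.rpow_pos_of_pos h1t _
  simp only [Fg2]
  have hsum2 : (2 : ℝ) ≤ (1 - t) ^ (β - 2 : ℝ) + (1 + t) ^ (-β - 1 : ℝ) := by linarith
  have key : β * (1 - β) * 2 ≤ β * (1 - β) * ((1 - t) ^ (β - 2 : ℝ) + (1 + t) ^ (-β - 1 : ℝ)) :=
    mul_le_mul_of_nonneg_left hsum2 hββ
  have key' : α * (1 - α) * (1 + t) ^ (α - 2 : ℝ) ≤ α * (1 - α) := by nlinarith
  have hid : β * (1 - β) * 2 - α * (1 - α) = (α - 1) ^ 2 / 2 := by rw [hβdef]; ring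
  nlinarith [key, key']

private lemma aux_g_lower (α : ℝ) (hα0 : 0 ≤ α) (hα1 : α ≤ 1 / 3)
    (x : ℝ) (hx0 : 0 < x) (hx1 : x < 1) :
    0 ≤ Fg α ((1 - α) / 2) x := by
  set β : ℝ := (1 - α) / 2 with hβdef
  have hmem : ∀ t ∈ Set.Icc (0 : ℝ) x, 0 < 1 + t ∧ 0 < 1 - t := by
    intro t ht
    exact ⟨by linarith [ht.1], by linarith [ht.2]⟩
  have interior_sub : interior (Set.Icc (0 : ℝ) x) ⊆ Set.Icc (0 : ℝ) x := interior_subset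
  have mono1 : MonotoneOn (Fg1 α β) (Set.Icc (0 : ℝ) x) := by
    apply monotoneOn_of_deriv_nonneg (convex_Icc 0 x)
    · intro t ht
      exact (Fg1_deriv α β t (hmem t ht).1 (hmem t ht).2).continuousAt.continuousWithinAt
    · intro t ht
      have ht' := interior_sub ht
      exact (Fg1_deriv α β t (hmem t ht').1 (hmem t ht').2).differentiableAt.differentiableWithinAt
    · intro t ht
      have ht' := interior_sub ht
      rw [(Fg1_deriv α β t (hmem t ht').1 (hmem t ht').2).deriv]
      exact Fg2_nonneg α hα0 hα1 t ht'.1 (lt_of_le_of_lt ht'.2 hx1)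
  have h1zero : Fg1 α β 0 = 0 := by
    simp only [Fg1]
    norm_num [Real.one_rpow]
    rw [hβdef]; ring
  have h1nonneg : ∀ t ∈ Set.Icc (0 : ℝ) x, 0 ≤ Fg1 α β t := by
    intro t ht
    have := mono1 (Set.left_mem_Icc.2 hx0.le) ht ht.1
    linarith [h1zero ▸ this]
  have mono2 : MonotoneOn (Fg α β) (Set.Icc (0 : ℝ) x) := by
    apply monotoneOn_of_deriv_nonneg (convex_Icc 0 x)
    · intro t ht
      exact (Fg_deriv α β t (hmem t ht).1 (hmem t ht).2).continuousAt.continuousWithinAt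
    · intro t ht
      have ht' := interior_sub ht
      exact (Fg_deriv α β t (hmem t ht').1 (hmem t ht').2).differentiableAt.differentiableWithinAt
    · intro t ht
      have ht' := interior_sub ht
      rw [(Fg_deriv α β t (hmem t ht').1 (hmem t ht').2).deriv]
      exact h1nonneg t ht'
  have hzero : Fg α β 0 = 0 := by
    simp only [Fg]
    norm_num [Real.one_rpow]
  have := mono2 (Set.left_mem_Icc.2 hx0.le) (Set.right_mem_Icc.2 hx0.le) hx0.le
  rw [hzero] at this
  exact this

/-- Lemma 4.2: `g(x) ≥ ((α−1)²/4) x²` for `α ∈ [0, 1/3]` and `x ∈ (0,1)`. -/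
theorem g_lower_bound_small_alpha (α : ℝ) (hα : α ∈ Set.Icc (0 : ℝ) (1 / 3))
    (x : ℝ) (hx : x ∈ Set.Ioo (0 : ℝ) 1) :
    1 + (1 + x) ^ α - (1 - x) ^ ((1 - α) / 2) - (1 + x) ^ ((1 + α) / 2) ≥
      (α - 1) ^ 2 / 4 * x ^ 2 := by
  have h := aux_g_lower α hα.1 hα.2 x hx.1 hx.2
  simp only [Fg] at h
  rw [show (1 - (1 - α) / 2 : ℝ) = (1 + α) / 2 by ring] at h
  linarith
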